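/- In the one-step setting, the COMA estimator A^i(a^{-i},a^i)·g(a^i), where A^i(a^{-i},a^i) = Q(a^{-i},a^i) − E_{a'^i ~ π_i}[Q(a^{-i},a'^i)], satisfies: Var over a ~ π of the COMA estimator minus Var over a^i ~ π_i of the decentralised estimator Q^i(a^i)·g(a^i) is at most (ε_i · B_i)², where B_i = sup ||g||, ε_i = sup |A^i|. -/

import Mathlib

open Finset

/-- Variance of `f` under weights `w`: `E[f²] − (E[f])²`. -/
def varOf {α : Type*} [Fintype α] (w : α → ℝ) (f : α → ℝ) : ℝ :=
  (∑ a, w a * f a ^ 2) - (∑ a, w a * f a) ^ 2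

section aux

variable {n : ℕ} {A : Fin n → Type*} [∀ i, Fintype (A i)]

lemma coma_prod_update (π : ∀ i, A i → ℝ) (i : Fin n) (a : ∀ k, A k) (x : A i) :
    π i (a i) * ∏ k, π k (Function.update a i x k) = π i x * ∏ k, π k (a k) := by
  have h1 : (∏ k, π k (Function.update a i x k))
      = ∏ k, Function.update (fun k => π k (a k)) i (π i x) k := by
    apply Finset.prod_congr rfl
    intro k _
    rcases eq_or_ne k i with rfl | h
    · simp
    · simp [Function.update_of_ne h]
  rw [h1, Finset.prod_update_of_mem (Finset.mem_univ i),
    ← Finset.mul_prod_erase Finset.univ (fun k => π k (a k)) (Finset.mem_univ i)]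
  simp [Finset.erase_eq]
  ring

lemma coma_M2 (π : ∀ i, A i → ℝ) (hπ1 : ∀ i, ∑ x, π i x = 1) (i : Fin n)
    (F : A i → (∀ k, A k) → ℝ)
    (hF : ∀ x a y, F x (Function.update a i y) = F x a) :
    ∑ a : ∀ k, A k, (∏ k, π k (a k)) * F (a i) a
      = ∑ x : A i, π i x * ∑ a : ∀ k, A k, (∏ k, π k (a k)) * F x a := by
  classical
  have hinv : Function.Involutive
      (fun p : A i × (∀ k, A k) => (p.2 i, Function.update p.2 i p.1)) := by
    intro p
    simp [Function.update_idem]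
  set f : A i × (∀ k, A k) → ℝ :=
    fun p => π i p.1 * ((∏ k, π k (p.2 k)) * F p.1 p.2) with hf
  have h1 : ∑ p, f (hinv.toPerm _ p) = ∑ p, f p := Equiv.sum_comp _ f
  have h2 : ∀ p : A i × (∀ k, A k),
      f (hinv.toPerm _ p) = π i p.1 * ((∏ k, π k (p.2 k)) * F (p.2 i) p.2) := by
    intro p
    simp only [Function.Involutive.coe_toPerm, hf]
    rw [hF, ← mul_assoc, coma_prod_update, mul_assoc]
  have h3 : ∑ p : A i × (∀ k, A k), f p
      = ∑ x : A i, π i x * ∑ a : ∀ k, A k, (∏ k, π k (a k)) * F x a := by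
    rw [Fintype.sum_prod_type]
    apply Finset.sum_congr rfl
    intro x _
    rw [Finset.mul_sum]
  have h4 : ∑ p : A i × (∀ k, A k), π i p.1 * ((∏ k, π k (p.2 k)) * F (p.2 i) p.2)
      = ∑ a : ∀ k, A k, (∏ k, π k (a k)) * F (a i) a := by
    rw [Fintype.sum_prod_type, Finset.sum_comm]
    apply Finset.sum_congr rfl
    intro a _
    dsimp only
    rw [← Finset.sum_mul, hπ1 i, one_mul]
  calc ∑ a : ∀ k, A k, (∏ k, π k (a k)) * F (a i) a
      = ∑ p : A i × (∀ k, A k), π i p.1 * ((∏ k, π k (p.2 k)) * F (p.2 i) p.2) := h4.symm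
    _ = ∑ p, f (hinv.toPerm _ p) := Finset.sum_congr rfl fun p _ => (h2 p).symm
    _ = ∑ p, f p := h1
    _ = ∑ x : A i, π i x * ∑ a : ∀ k, A k, (∏ k, π k (a k)) * F x a := h3

lemma coma_w_one (π : ∀ i, A i → ℝ) (hπ1 : ∀ i, ∑ x, π i x = 1) :
    ∑ a : ∀ k, A k, ∏ k, π k (a k) = 1 := by
  classical
  rw [← Fintype.prod_sum (fun i x => π i x)]
  simp [hπ1]

end aux


/-- The excess total variance of the COMA estimator `A^i(a^{-i},a^i)·g(a^i)` over the
decentralised estimator `Q^i(a^i)·g(a^i)` is at most `(ε_i B_i)²`. -/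
theorem excess_variance_coma_bound
    {n : ℕ} {A : Fin n → Type*} [∀ i, Fintype (A i)] [∀ i, Nonempty (A i)] {d : ℕ}
    (π : ∀ i, A i → ℝ) (hπ0 : ∀ i x, 0 ≤ π i x) (hπ1 : ∀ i, ∑ x, π i x = 1)
    (Q : (∀ i, A i) → ℝ) (i : Fin n)
    (g : A i → Fin d → ℝ) (hg : ∀ j, ∑ x, π i x * g x j = 0)
    (Bi : ℝ) (hB0 : 0 ≤ Bi) (hB : ∀ x, ∑ j, (g x j) ^ 2 ≤ Bi ^ 2)
    (εi : ℝ)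
    (hε : ∀ a : ∀ k, A k,
      |Q a - ∑ x : A i, π i x * Q (Function.update a i x)| ≤ εi) :
    (∑ j : Fin d, varOf (fun a : ∀ k, A k => ∏ k, π k (a k))
          (fun a => (Q a - ∑ x : A i, π i x * Q (Function.update a i x)) * g (a i) j))
      - (∑ j : Fin d, varOf (π i)
          (fun x => (∑ b : ∀ k, A k, (∏ k, π k (b k)) * Q (Function.update b i x)) * g x j))
      ≤ (εi * Bi) ^ 2 := by
  classical
  have hεnn : 0 ≤ εi := le_trans (abs_nonneg _) (hε (Classical.arbitrary _))
  have hw0 : ∀ a : ∀ k, A k, 0 ≤ ∏ k, π k (a k) :=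
    fun a => Finset.prod_nonneg fun k _ => hπ0 k (a k)
  have hw1 : ∑ a : ∀ k, A k, ∏ k, π k (a k) = 1 := coma_w_one π hπ1
  have hQbupd : ∀ (a : ∀ k, A k) (y : A i),
      (∑ x : A i, π i x * Q (Function.update (Function.update a i y) i x))
        = ∑ x : A i, π i x * Q (Function.update a i x) := by
    intro a y
    exact Finset.sum_congr rfl fun x _ => by rw [Function.update_idem]
  -- mean equality
  have hmean : ∀ j : Fin d,
      (∑ a : ∀ k, A k, (∏ k, π k (a k)) *
          ((Q a - ∑ x : A i, π i x * Q (Function.update a i x)) * g (a i) j))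
        = ∑ x : A i, π i x *
            ((∑ b : ∀ k, A k, (∏ k, π k (b k)) * Q (Function.update b i x)) * g x j) := by
    intro j
    have e1 : ∑ a : ∀ k, A k, (∏ k, π k (a k)) * (Q a * g (a i) j)
        = ∑ x : A i, π i x *
            ∑ a : ∀ k, A k, (∏ k, π k (a k)) * (Q (Function.update a i x) * g x j) := by
      have h := coma_M2 π hπ1 i (fun x a => Q (Function.update a i x) * g x j)
        (fun x a y => by simp only [Function.update_idem])
      simpa [Function.update_eq_self] using h
    have e2 : ∑ a : ∀ k, A k, (∏ k, π k (a k)) *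
          ((∑ x : A i, π i x * Q (Function.update a i x)) * g (a i) j) = 0 := by
      have h := coma_M2 π hπ1 i
        (fun x a => g x j * ∑ y : A i, π i y * Q (Function.update a i y))
        (fun x a y => by rw [hQbupd])
      calc ∑ a : ∀ k, A k, (∏ k, π k (a k)) *
              ((∑ x : A i, π i x * Q (Function.update a i x)) * g (a i) j)
          = ∑ a : ∀ k, A k, (∏ k, π k (a k)) *
              (g (a i) j * ∑ y : A i, π i y * Q (Function.update a i y)) :=
            Finset.sum_congr rfl fun a _ => by ring
        _ = ∑ x : A i, π i x * ∑ a : ∀ k, A k, (∏ k, π k (a k)) *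
              (g x j * ∑ y : A i, π i y * Q (Function.update a i y)) := h
        _ = ∑ x : A i, (π i x * g x j) * ∑ a : ∀ k, A k, (∏ k, π k (a k)) *
              (∑ y : A i, π i y * Q (Function.update a i y)) := by
            refine Finset.sum_congr rfl fun x _ => ?_
            rw [Finset.mul_sum, Finset.mul_sum]
            exact Finset.sum_congr rfl fun a _ => by ring
        _ = (∑ x : A i, π i x * g x j) * ∑ a : ∀ k, A k, (∏ k, π k (a k)) *
              (∑ y : A i, π i y * Q (Function.update a i y)) := by
            rw [Finset.sum_mul]
        _ = 0 := by rw [hg j, zero_mul]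
    calc ∑ a : ∀ k, A k, (∏ k, π k (a k)) *
            ((Q a - ∑ x : A i, π i x * Q (Function.update a i x)) * g (a i) j)
        = ∑ a : ∀ k, A k, ((∏ k, π k (a k)) * (Q a * g (a i) j)
            - (∏ k, π k (a k)) *
              ((∑ x : A i, π i x * Q (Function.update a i x)) * g (a i) j)) :=
          Finset.sum_congr rfl fun a _ => by ring
      _ = ∑ a : ∀ k, A k, (∏ k, π k (a k)) * (Q a * g (a i) j)
            - ∑ a : ∀ k, A k, (∏ k, π k (a k)) *
              ((∑ x : A i, π i x * Q (Function.update a i x)) * g (a i) j) :=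
          Finset.sum_sub_distrib _ _
      _ = ∑ x : A i, π i x *
            ∑ a : ∀ k, A k, (∏ k, π k (a k)) * (Q (Function.update a i x) * g x j) := by
          rw [e1, e2, sub_zero]
      _ = ∑ x : A i, π i x *
            ((∑ b : ∀ k, A k, (∏ k, π k (b k)) * Q (Function.update b i x)) * g x j) := by
          refine Finset.sum_congr rfl fun x _ => ?_
          rw [Finset.sum_mul, Finset.mul_sum, Finset.mul_sum]
          exact Finset.sum_congr rfl fun a _ => by ring
  -- bound on the second moment of the COMA estimator
  have hsq : ∑ j : Fin d, ∑ a : ∀ k, A k, (∏ k, π k (a k)) *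
        ((Q a - ∑ x : A i, π i x * Q (Function.update a i x)) * g (a i) j) ^ 2
      ≤ (εi * Bi) ^ 2 := by
    rw [Finset.sum_comm]
    have point : ∀ a : ∀ k, A k,
        ∑ j : Fin d, (∏ k, π k (a k)) *
          ((Q a - ∑ x : A i, π i x * Q (Function.update a i x)) * g (a i) j) ^ 2
        ≤ (∏ k, π k (a k)) * (εi ^ 2 * Bi ^ 2) := by
      intro a
      rw [← Finset.mul_sum]
      refine mul_le_mul_of_nonneg_left ?_ (hw0 a)
      calc ∑ j : Fin d,
              ((Q a - ∑ x : A i, π i x * Q (Function.update a i x)) * g (a i) j) ^ 2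
          = (Q a - ∑ x : A i, π i x * Q (Function.update a i x)) ^ 2 *
              ∑ j : Fin d, g (a i) j ^ 2 := by
            rw [Finset.mul_sum]
            exact Finset.sum_congr rfl fun j _ => by ring
        _ ≤ εi ^ 2 * Bi ^ 2 := by
            refine mul_le_mul ?_ (hB (a i)) (Finset.sum_nonneg fun j _ => sq_nonneg _)
              (sq_nonneg _)
            have h := abs_le.mp (hε a)
            exact sq_le_sq' h.1 h.2
    calc ∑ a : ∀ k, A k, ∑ j : Fin d, (∏ k, π k (a k)) *
            ((Q a - ∑ x : A i, π i x * Q (Function.update a i x)) * g (a i) j) ^ 2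
        ≤ ∑ a : ∀ k, A k, (∏ k, π k (a k)) * (εi ^ 2 * Bi ^ 2) :=
          Finset.sum_le_sum fun a _ => point a
      _ = (εi * Bi) ^ 2 := by rw [← Finset.sum_mul, hw1, one_mul]; ring
  have hpos : (0:ℝ) ≤ ∑ j : Fin d, ∑ x : A i, π i x *
      ((∑ b : ∀ k, A k, (∏ k, π k (b k)) * Q (Function.update b i x)) * g x j) ^ 2 :=
    Finset.sum_nonneg fun j _ => Finset.sum_nonneg fun x _ =>
      mul_nonneg (hπ0 i x) (sq_nonneg _)
  simp only [varOf]
  rw [Finset.sum_sub_distrib, Finset.sum_sub_distrib]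
  have hm : ∑ j : Fin d, (∑ a : ∀ k, A k, (∏ k, π k (a k)) *
        ((Q a - ∑ x : A i, π i x * Q (Function.update a i x)) * g (a i) j)) ^ 2
      = ∑ j : Fin d, (∑ x : A i, π i x *
        ((∑ b : ∀ k, A k, (∏ k, π k (b k)) * Q (Function.update b i x)) * g x j)) ^ 2 :=
    Finset.sum_congr rfl fun j _ => by rw [hmean j]
  linarith [hsq, hpos, hm]
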